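/- For the Wasserstein p-distance W_p on probability measures on ℝ with finite p-th moment, for any P, Q and α, α' ∈ [0,1], W_p(αP+(1-α)Q, α'P+(1-α')Q) ≤ |α-α'|^{1/p} · W_p(P,Q). -/

import Mathlib

open MeasureTheory

/-- The set of couplings of two measures on `ℝ`. -/
def couplings (P Q : Measure ℝ) : Set (Measure (ℝ × ℝ)) :=
  {π | π.map Prod.fst = P ∧ π.map Prod.snd = Q}

/-- The Wasserstein distance of order `p` on probability measures on `ℝ`, defined as the
infimum over couplings of the `p`-th transport cost, raised to the power `1/p`. -/
noncomputable def Wp (p : ℝ) (P Q : Measure ℝ) : ℝ :=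
  (sInf {c : ℝ | ∃ π ∈ couplings P Q, c = ∫ z : ℝ × ℝ, |z.1 - z.2| ^ p ∂π}) ^ (1 / p)

/-- The mixture `a • P + (1-a) • Q`. -/
noncomputable def mixM (a : ℝ) (P Q : Measure ℝ) : Measure ℝ :=
  ENNReal.ofReal a • P + ENNReal.ofReal (1 - a) • Q


section aux

variable {P Q : Measure ℝ}

lemma fmeas (p : ℝ) : Measurable fun z : ℝ × ℝ => |z.1 - z.2| ^ p :=
  (measurable_fst.sub measurable_snd).abs.pow_const p

lemma diag_meas : Measurable fun x : ℝ => (x, x) := measurable_id.prodMk measurable_id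

/-- the diagonal cost-zero fact -/
lemma f_ae_zero_diag (p : ℝ) (hp : 1 ≤ p) (μ : Measure ℝ) :
    (fun z : ℝ × ℝ => |z.1 - z.2| ^ p) =ᵐ[μ.map (fun x => (x, x))] 0 := by
  rw [Filter.EventuallyEq, ae_iff]
  rw [Measure.map_apply diag_meas]
  · convert measure_empty (μ := μ) using 2
    ext x
    simp [Real.zero_rpow (by linarith : p ≠ 0)]
  · exact (fmeas p) (measurableSet_singleton 0).compl

lemma mixM_comm (a : ℝ) (ha : a ∈ Set.Icc (0:ℝ) 1) : mixM (1 - a) Q P = mixM a P Q := by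
  simp only [mixM, sub_sub_cancel]
  exact add_comm _ _

lemma swap_mem_couplings {π : Measure (ℝ × ℝ)} (hπ : π ∈ couplings P Q) :
    π.map Prod.swap ∈ couplings Q P := by
  obtain ⟨h1, h2⟩ := hπ
  constructor
  · rw [Measure.map_map measurable_fst measurable_swap]
    exact h2
  · rw [Measure.map_map measurable_snd measurable_swap]
    exact h1

lemma cost_swap (p : ℝ) (π : Measure (ℝ × ℝ)) :
    (∫ z : ℝ × ℝ, |z.1 - z.2| ^ p ∂(π.map Prod.swap)) = ∫ z : ℝ × ℝ, |z.1 - z.2| ^ p ∂π := by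
  rw [integral_map measurable_swap.aemeasurable ((fmeas p).aestronglyMeasurable)]
  simp only [Prod.fst_swap, Prod.snd_swap]
  congr 1
  ext z
  rw [abs_sub_comm]

/-- integral over ν + ρ where f vanishes a.e. on ν -/
lemma integral_add_of_ae_zero {f : ℝ × ℝ → ℝ} (hf : Measurable f)
    {ν ρ : Measure (ℝ × ℝ)} (h0 : f =ᵐ[ν] 0) :
    ∫ z, f z ∂(ν + ρ) = ∫ z, f z ∂ρ := by
  by_cases h : Integrable f ρ
  · rw [integral_add_measure ((integrable_zero _ _ ν).congr h0.symm) h,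
      integral_eq_zero_of_ae h0, zero_add]
  · rw [integral_undef (fun H => h (integrable_add_measure.mp H).2), integral_undef h]

end aux

/-- Key construction: coupling of mixtures from a coupling of P Q, case b ≤ c. -/
lemma mix_coupling (p : ℝ) (hp : 1 ≤ p) (P Q : Measure ℝ)
    [IsProbabilityMeasure P] [IsProbabilityMeasure Q]
    (b c : ℝ) (hb : 0 ≤ b) (hbc : b ≤ c) (hc : c ≤ 1)
    {π : Measure (ℝ × ℝ)} (hπ : π ∈ couplings P Q) :
    ∃ μ ∈ couplings (mixM c P Q) (mixM b P Q),
      (∫ z : ℝ × ℝ, |z.1 - z.2| ^ p ∂μ) = (c - b) * ∫ z : ℝ × ℝ, |z.1 - z.2| ^ p ∂π := by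
  obtain ⟨h1, h2⟩ := hπ
  set d : ℝ → ℝ × ℝ := fun x => (x, x) with hd
  set μ : Measure (ℝ × ℝ) :=
    (ENNReal.ofReal b • P.map d + ENNReal.ofReal (1 - c) • Q.map d)
      + ENNReal.ofReal (c - b) • π with hμ
  refine ⟨μ, ⟨?_, ?_⟩, ?_⟩
  · rw [hμ, Measure.map_add _ _ measurable_fst, Measure.map_add _ _ measurable_fst,
      Measure.map_smul, Measure.map_smul, Measure.map_smul,
      Measure.map_map measurable_fst diag_meas, Measure.map_map measurable_fst diag_meas]
    have : (Prod.fst ∘ d) = id := rfl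
    rw [this, Measure.map_id, Measure.map_id, h1, mixM]
    have : ENNReal.ofReal c = ENNReal.ofReal b + ENNReal.ofReal (c - b) := by
      rw [← ENNReal.ofReal_add hb (by linarith)]; ring_nf
    rw [this, add_smul]
    abel
  · rw [hμ, Measure.map_add _ _ measurable_snd, Measure.map_add _ _ measurable_snd,
      Measure.map_smul, Measure.map_smul, Measure.map_smul,
      Measure.map_map measurable_snd diag_meas, Measure.map_map measurable_snd diag_meas]
    have : (Prod.snd ∘ d) = id := rfl
    rw [this, Measure.map_id, Measure.map_id, h2, mixM]
    have : ENNReal.ofReal (1 - b) = ENNReal.ofReal (1 - c) + ENNReal.ofReal (c - b) := by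
      rw [← ENNReal.ofReal_add (by linarith) (by linarith)]; ring_nf
    rw [this, add_smul]
    abel
  · have h0 : (fun z : ℝ × ℝ => |z.1 - z.2| ^ p)
        =ᵐ[ENNReal.ofReal b • P.map d + ENNReal.ofReal (1 - c) • Q.map d] 0 := by
      have hP := f_ae_zero_diag p hp P
      have hQ := f_ae_zero_diag p hp Q
      rw [Filter.EventuallyEq, ae_iff] at *
      simp only [Measure.add_apply, Measure.smul_apply, smul_eq_mul]
      rw [hP, hQ, mul_zero, mul_zero, add_zero]
    rw [hμ, integral_add_of_ae_zero (fmeas p) h0, integral_smul_measure,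
      ENNReal.toReal_ofReal (by linarith), smul_eq_mul]

/-- `W_p(αP+(1-α)Q, α'P+(1-α')Q) ≤ |α-α'|^{1/p} ⬝ W_p(P,Q)`. -/
theorem wasserstein_mixture_coefficient_bound
    (p : ℝ) (hp : 1 ≤ p) (P Q : Measure ℝ)
    [IsProbabilityMeasure P] [IsProbabilityMeasure Q]
    (hPfin : (∫⁻ x, ENNReal.ofReal (|x| ^ p) ∂P) < ⊤)
    (hQfin : (∫⁻ x, ENNReal.ofReal (|x| ^ p) ∂Q) < ⊤)
    (a a' : ℝ) (ha : a ∈ Set.Icc (0:ℝ) 1) (ha' : a' ∈ Set.Icc (0:ℝ) 1) :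
    Wp p (mixM a P Q) (mixM a' P Q) ≤ |a - a'| ^ (1 / p) * Wp p P Q := by
  obtain ⟨ha0, ha1⟩ := ha
  obtain ⟨ha'0, ha'1⟩ := ha'
  set S := {c : ℝ | ∃ π ∈ couplings P Q, c = ∫ z : ℝ × ℝ, |z.1 - z.2| ^ p ∂π} with hS
  set T := {c : ℝ | ∃ π ∈ couplings (mixM a P Q) (mixM a' P Q),
      c = ∫ z : ℝ × ℝ, |z.1 - z.2| ^ p ∂π} with hT
  have key : ∀ x ∈ S, |a - a'| * x ∈ T := by
    rintro x ⟨π, hπ, rfl⟩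
    rcases le_total a' a with h | h
    · obtain ⟨μ, hμ, hcost⟩ := mix_coupling p hp P Q a' a ha'0 h ha1 hπ
      exact ⟨μ, hμ, by rw [hcost, abs_of_nonneg (by linarith)]⟩
    · obtain ⟨μ, hμ, hcost⟩ := mix_coupling p hp Q P (1 - a') (1 - a)
        (by linarith) (by linarith) (by linarith) (swap_mem_couplings hπ)
      rw [mixM_comm a ⟨ha0, ha1⟩, mixM_comm a' ⟨ha'0, ha'1⟩] at hμ
      refine ⟨μ, hμ, ?_⟩
      rw [hcost, cost_swap, abs_of_nonpos (by linarith)]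
      ring_nf
  have hSne : S.Nonempty := by
    refine ⟨_, P.prod Q, ⟨?_, ?_⟩, rfl⟩
    · simp [Measure.map_fst_prod]
    · simp [Measure.map_snd_prod]
  have hSnonneg : ∀ x ∈ S, (0:ℝ) ≤ x := by
    rintro x ⟨π, hπ, rfl⟩
    exact integral_nonneg fun z => Real.rpow_nonneg (abs_nonneg _) p
  have hTnonneg : ∀ x ∈ T, (0:ℝ) ≤ x := by
    rintro x ⟨π, hπ, rfl⟩
    exact integral_nonneg fun z => Real.rpow_nonneg (abs_nonneg _) p
  have hTne : T.Nonempty := by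
    obtain ⟨x, hx⟩ := hSne
    exact ⟨_, key x hx⟩
  have h1 : sInf T ≤ |a - a'| * sInf S := by
    rw [← smul_eq_mul, ← Real.sInf_smul_of_nonneg (abs_nonneg _)]
    refine le_csInf (hSne.smul_set) ?_
    rintro b ⟨x, hx, rfl⟩
    exact csInf_le ⟨0, hTnonneg⟩ (key x hx)
  have hT0 : 0 ≤ sInf T := le_csInf hTne hTnonneg
  have hS0 : 0 ≤ sInf S := le_csInf hSne hSnonneg
  unfold Wp
  calc (sInf T) ^ (1/p) ≤ (|a - a'| * sInf S) ^ (1/p) :=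
        Real.rpow_le_rpow hT0 h1 (by positivity)
    _ = |a - a'| ^ (1/p) * (sInf S) ^ (1/p) := Real.mul_rpow (abs_nonneg _) hS0
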